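/- Let S and T be monads on a category C and let γ : S ⇒ T be a monad morphism, i._e. γ ∘ η^S = η^T and γ ∘ μ^S = μ^T ∘ γγ. Then η^S μ^T ∘ Tγ : TS ⇒ ST is a weak distributive law (it satisfies axioms (η+), (μ+), and (μ−)). -/

import Mathlib

open CategoryTheory

universe v u

/-- Raw monad data: an endofunctor together with unit and multiplication components
(the monad laws are not required). -/
structure MonadData (C : Type u) [Category.{v} C] where
  F : C ⥤ C
  unit : ∀ X : C, X ⟶ F.obj X
  mult : ∀ X : C, F.obj (F.obj X) ⟶ F.obj X

variable {C : Type u} [Category.{v} C]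

/-- The data underlying a monad. -/
def CategoryTheory.Monad.data (T : Monad C) : MonadData C where
  F := T.toFunctor
  unit X := T.η.app X
  mult X := T.μ.app X

/-- The monad laws (two unitality axioms and associativity) for raw monad data. -/
def MonadData.IsMonad (A : MonadData C) : Prop :=
  (∀ X : C, A.unit (A.F.obj X) ≫ A.mult X = 𝟙 (A.F.obj X)) ∧
  (∀ X : C, A.F.map (A.unit X) ≫ A.mult X = 𝟙 (A.F.obj X)) ∧
  (∀ X : C, A.F.map (A.mult X) ≫ A.mult X = A.mult (A.F.obj X) ≫ A.mult X)

/-- Axiom (η+) for a law `l : TS ⇒ ST` of the monad `A` (playing `S`) over `B` (playing `T`). -/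
def EtaPlus (A B : MonadData C) (l : (A.F ⋙ B.F) ⟶ (B.F ⋙ A.F)) : Prop :=
  ∀ X : C, B.F.map (A.unit X) ≫ l.app X = A.unit (B.F.obj X)

/-- Axiom (μ+): `λ ∘ Tμ^S = μ^S T ∘ Sλ ∘ λS`. -/
def MuPlus (A B : MonadData C) (l : (A.F ⋙ B.F) ⟶ (B.F ⋙ A.F)) : Prop :=
  ∀ X : C, B.F.map (A.mult X) ≫ l.app X =
    l.app (A.F.obj X) ≫ A.F.map (l.app X) ≫ A.mult (B.F.obj X)

/-- Axiom (η−): `λ ∘ η^T S = Sη^T`. -/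
def EtaMinus (A B : MonadData C) (l : (A.F ⋙ B.F) ⟶ (B.F ⋙ A.F)) : Prop :=
  ∀ X : C, B.unit (A.F.obj X) ≫ l.app X = A.F.map (B.unit X)

/-- Axiom (μ−): `λ ∘ μ^T S = Sμ^T ∘ λT ∘ Tλ`. -/
def MuMinus (A B : MonadData C) (l : (A.F ⋙ B.F) ⟶ (B.F ⋙ A.F)) : Prop :=
  ∀ X : C, B.mult (A.F.obj X) ≫ l.app X =
    B.F.map (l.app X) ≫ l.app (B.F.obj X) ≫ A.F.map (B.mult X)

/-- A weak distributive law satisfies (η+), (μ+) and (μ−). -/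
def IsWDL (A B : MonadData C) (l : (A.F ⋙ B.F) ⟶ (B.F ⋙ A.F)) : Prop :=
  EtaPlus A B l ∧ MuPlus A B l ∧ MuMinus A B l

/-- A distributive law satisfies all four axioms. -/
def IsDL (A B : MonadData C) (l : (A.F ⋙ B.F) ⟶ (B.F ⋙ A.F)) : Prop :=
  EtaPlus A B l ∧ MuPlus A B l ∧ EtaMinus A B l ∧ MuMinus A B l

/-- The natural family `κ := Sμ^T ∘ λT ∘ η^T ST : ST ⇒ ST` associated with a law. -/
def lawKappa (A B : MonadData C) (l : (A.F ⋙ B.F) ⟶ (B.F ⋙ A.F)) (X : C) :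
    A.F.obj (B.F.obj X) ⟶ A.F.obj (B.F.obj X) :=
  B.unit (A.F.obj (B.F.obj X)) ≫ l.app (B.F.obj X) ≫ A.F.map (B.mult X)

/-- The Yang–Baxter equation `σT ∘ Sτ ∘ λR = Rλ ∘ τS ∘ Tσ` for laws
`l : TS ⇒ ST`, `s : SR ⇒ RS`, `t : TR ⇒ RT`. -/
def YangBaxter (Rm Sm Tm : MonadData C)
    (l : (Sm.F ⋙ Tm.F) ⟶ (Tm.F ⋙ Sm.F))
    (s : (Rm.F ⋙ Sm.F) ⟶ (Sm.F ⋙ Rm.F))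
    (t : (Rm.F ⋙ Tm.F) ⟶ (Tm.F ⋙ Rm.F)) : Prop :=
  ∀ X : C, l.app (Rm.F.obj X) ≫ Sm.F.map (t.app X) ≫ s.app (Tm.F.obj X) =
    Tm.F.map (s.app X) ≫ t.app (Sm.F.obj X) ≫ Rm.F.map (l.app X)

/-- The composite monad data `S ∘_λ T = (ST, η^S η^T, μ^S μ^T ∘ SλT)` of a distributive law. -/
def compData (A B : MonadData C) (l : (A.F ⋙ B.F) ⟶ (B.F ⋙ A.F)) : MonadData C where
  F := B.F ⋙ A.F
  unit X := B.unit X ≫ A.unit (B.F.obj X)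
  mult X := A.F.map (l.app (B.F.obj X)) ≫ A.F.map (A.F.map (B.mult X)) ≫ A.mult (B.F.obj X)

/-- The weak composite monad data `S •_λ T` built from a splitting `(K, p, i)` of `κ`. -/
def wcompData (A B : MonadData C) (l : (A.F ⋙ B.F) ⟶ (B.F ⋙ A.F))
    (K : C ⥤ C) (p : (B.F ⋙ A.F) ⟶ K) (i : K ⟶ (B.F ⋙ A.F)) : MonadData C where
  F := K
  unit X := B.unit X ≫ A.unit (B.F.obj X) ≫ p.app X
  mult X := i.app (K.obj X) ≫ A.F.map (B.F.map (i.app X)) ≫ A.F.map (l.app (B.F.obj X)) ≫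
    A.F.map (A.F.map (B.mult X)) ≫ A.mult (B.F.obj X) ≫ p.app X

/-- The trivial law `η^S μ^T ∘ Tγ : TS ⇒ ST` induced by a natural transformation
`γ : S ⇒ T`. -/
def trivLaw {C : Type u} [Category.{v} C] (S T : Monad C)
    (γ : S.toFunctor ⟶ T.toFunctor) :
    (S.toFunctor ⋙ T.toFunctor) ⟶ (T.toFunctor ⋙ S.toFunctor) :=
  Functor.whiskerRight γ T.toFunctor ≫ T.μ ≫ Functor.whiskerLeft T.toFunctor S.η

/-- If `γ : S ⇒ T` is a monad morphism, then
`η^S μ^T ∘ Tγ : TS ⇒ ST` is a weak distributive law. -/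
theorem trivial_wdl {C : Type u} [Category.{v} C] (S T : Monad C)
    (γ : S.toFunctor ⟶ T.toFunctor)
    (hη : ∀ X : C, S.η.app X ≫ γ.app X = T.η.app X)
    (hμ : ∀ X : C, S.μ.app X ≫ γ.app X = γ.app (S.obj X) ≫ T.map (γ.app X) ≫ T.μ.app X) :
    IsWDL S.data T.data (trivLaw S T γ) := by
  have lapp : ∀ X : C, (trivLaw S T γ).app X =
      T.map (γ.app X) ≫ T.μ.app X ≫ S.η.app (T.obj X) := by
    intro X; simp [trivLaw]
  have heta : ∀ {X Y Z : C} (f : X ⟶ Y) (g : S.obj Y ⟶ Z),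
      S.η.app X ≫ S.map f ≫ g = f ≫ S.η.app Y ≫ g := by
    intro X Y Z f g
    rw [← Category.assoc, ← Category.assoc]
    congr 1
    simpa using (S.η.naturality f).symm
  have heta2 : ∀ {X Y : C} (f : X ⟶ Y), S.η.app X ≫ S.map f = f ≫ S.η.app Y := by
    intro X Y f; simpa using (S.η.naturality f).symm
  refine ⟨?_, ?_, ?_⟩
  · intro X
    simp only [Monad.data, lapp, ← Category.assoc, ← T.map_comp, hη]
    simp [← T.η.naturality_assoc]
  · intro X
    simp only [Monad.data, lapp]
    rw [← Category.assoc, ← T.map_comp, hμ]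
    simp only [Functor.map_comp, Category.assoc]
    rw [heta, heta, Monad.right_unit]
    rw [← T.μ.naturality_assoc]
    simp [reassoc_of% T.assoc X]
  · intro X
    simp only [Monad.data, lapp]
    rw [← T.μ.naturality_assoc]
    simp only [Functor.comp_map, Functor.map_comp, Category.assoc, Monad.assoc]
    rw [heta2, ← Category.assoc (T.map (S.η.app (T.obj X))), ← T.map_comp, hη]
    simp [reassoc_of% T.assoc X]
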